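/- For every positive integer k and real α, the 2k-th moment of Z ~ BASLG₂(α) equals (2/C₂(α))·[4(1 - 2^{1-2k})Γ(2k+1)ζ(2k) + 8α²(1 - 2^{-(2k+1)})Γ(2k+3)ζ(2k+2) + α⁴(1 - 2^{-(2k+3)})Γ(2k+5)ζ(2k+4)]. -/

import Mathlib

open Real MeasureTheory

noncomputable def C₂ (α : ℝ) : ℝ := 4 + 8 * π ^ 2 * α ^ 2 / 3 + 7 * π ^ 4 * α ^ 4 / 15

noncomputable def f (z α : ℝ) : ℝ :=
  ((1 - α * z) ^ 2 + 1) ^ 2 * Real.exp (-z) / (C₂ α * (1 + Real.exp (-z)) ^ 2)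

noncomputable def zetaR (s : ℕ) : ℝ := ∑' n : ℕ, 1 / (n + 1 : ℝ) ^ s

open Set Measure

namespace BASLG2aux

/-- the logistic density -/
noncomputable def g (z : ℝ) : ℝ := Real.exp (-z) / (1 + Real.exp (-z)) ^ 2

lemma g_neg (z : ℝ) : g (-z) = g z := by
  unfold g
  have h1 : (0:ℝ) < 1 + Real.exp (-z) := by positivity
  have h2 : (0:ℝ) < 1 + Real.exp (- -z) := by positivity
  rw [div_eq_div_iff (by positivity) (by positivity)]
  have h : Real.exp z * Real.exp (-z) = 1 := by
    rw [← Real.exp_add]; simp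
  rw [neg_neg]
  nlinarith [h, Real.exp_pos z, Real.exp_pos (-z)]

lemma g_nonneg (z : ℝ) : 0 ≤ g z := by
  unfold g; positivity

lemma g_abs (z : ℝ) : g |z| = g z := by
  rcases le_or_gt 0 z with h | h
  · rw [abs_of_nonneg h]
  · rw [abs_of_neg h, g_neg]

lemma g_le (z : ℝ) : g z ≤ Real.exp (-|z|) := by
  rw [← g_abs]
  unfold g
  have h1 : (1:ℝ) ≤ (1 + Real.exp (-|z|)) ^ 2 := by
    nlinarith [Real.exp_pos (-|z|)]
  exact div_le_self (Real.exp_pos _).le h1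

lemma g_cont : Continuous g := by
  apply Continuous.div (by continuity) (by continuity)
  intro z; positivity

lemma integrable_comp_abs' {F : ℝ → ℝ} (hf : IntegrableOn F (Ioi 0)) :
    Integrable fun x => F |x| := by
  have int_Ioi : IntegrableOn (fun x => F |x|) (Ioi 0) := by
    refine hf.congr_fun (fun x hx => ?_) measurableSet_Ioi
    rw [abs_of_pos hx]
  have int_Iic : IntegrableOn (fun x ↦ F |x|) (Iic 0) := by
    rw [← Measure.map_neg_eq_self (volume : Measure ℝ)]
    have m : MeasurableEmbedding fun x : ℝ => -x := (Homeomorph.neg ℝ).measurableEmbedding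
    rw [m.integrableOn_map_iff]
    simp_rw [Function.comp_def, abs_neg, neg_preimage, neg_Iic, neg_zero]
    exact Iff.mpr integrableOn_Ici_iff_integrableOn_Ioi int_Ioi
  have h := int_Iic.union int_Ioi
  rwa [Iic_union_Ioi, integrableOn_univ] at h

lemma integrableOn_pow_mul_exp (p : ℕ) {c : ℝ} (hc : 0 < c) :
    IntegrableOn (fun t : ℝ => t ^ p * Real.exp (-(c * t))) (Ioi 0) := by
  have h := integrableOn_rpow_mul_exp_neg_mul_rpow (p := 1) (s := (p : ℝ))
    (lt_of_lt_of_le (by norm_num) (Nat.cast_nonneg p)) one_pos hc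
  refine h.congr_fun (fun x hx => ?_) measurableSet_Ioi
  beta_reduce
  rw [Real.rpow_one, Real.rpow_natCast, neg_mul]

lemma integrable_pow_mul_exp (p : ℕ) {c : ℝ} (hc : 0 < c) :
    Integrable fun z : ℝ => |z| ^ p * Real.exp (-(c * |z|)) :=
  integrable_comp_abs' (integrableOn_pow_mul_exp p hc)

lemma integral_pow_mul_exp (p : ℕ) {c : ℝ} (hc : 0 < c) :
    ∫ z : ℝ, |z| ^ p * Real.exp (-(c * |z|))
      = 2 * (Real.Gamma ((p : ℝ) + 1) / c ^ (p + 1)) := by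
  rw [integral_comp_abs (f := fun t => t ^ p * Real.exp (-(c * t)))]
  have h := Real.integral_rpow_mul_exp_neg_mul_Ioi (a := (p : ℝ) + 1) (r := c)
    (by positivity) hc
  have heq : ∫ t : ℝ in Ioi 0, t ^ ((p : ℝ) + 1 - 1) * Real.exp (-(c * t))
      = ∫ t : ℝ in Ioi 0, t ^ p * Real.exp (-(c * t)) := by
    refine setIntegral_congr_fun measurableSet_Ioi (fun t ht => ?_)
    rw [show (p : ℝ) + 1 - 1 = (p : ℝ) by ring, Real.rpow_natCast]
  rw [← heq, h]
  have hcp : (1 / c) ^ ((p : ℝ) + 1) = 1 / c ^ (p + 1) := by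
    rw [show ((p : ℝ) + 1) = ((p + 1 : ℕ) : ℝ) by push_cast; ring, Real.rpow_natCast,
      one_div, one_div, inv_pow]
  rw [hcp]
  ring

lemma summable_zeta (s : ℕ) (hs : 2 ≤ s) :
    Summable (fun n : ℕ => 1 / ((n : ℝ) + 1) ^ s) := by
  have h := summable_one_div_nat_pow.mpr (lt_of_lt_of_le one_lt_two hs)
  have h2 := (summable_nat_add_iff (f := fun n : ℕ => 1 / (n : ℝ) ^ s) 1).mpr h
  simpa using h2

lemma eta_eq (s : ℕ) (hs : 2 ≤ s) :
    ∑' i : ℕ, (-1 : ℝ) ^ i * (1 / ((i : ℝ) + 1) ^ s)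
      = (1 - (2 : ℝ) ^ ((1 : ℤ) - s)) * zetaR s := by
  set F : ℕ → ℝ := fun n => 1 / ((n : ℝ) + 1) ^ s with hF
  have hf : Summable F := summable_zeta s hs
  have hfe : Summable (fun k => F (2 * k)) :=
    hf.comp_injective (fun a b hab => by omega)
  have hfo : Summable (fun k => F (2 * k + 1)) :=
    hf.comp_injective (fun a b hab => by omega)
  have he_even : (fun k => (-1 : ℝ) ^ (2 * k) * F (2 * k)) = fun k => F (2 * k) := by
    funext k; rw [pow_mul]; simp
  have he_odd : (fun k => (-1 : ℝ) ^ (2 * k + 1) * F (2 * k + 1))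
      = fun k => -F (2 * k + 1) := by
    funext k; rw [pow_add, pow_mul]; simp
  have hse : Summable fun k => (-1 : ℝ) ^ (2 * k) * F (2 * k) := by
    rw [he_even]; exact hfe
  have hso : Summable fun k => (-1 : ℝ) ^ (2 * k + 1) * F (2 * k + 1) := by
    rw [he_odd]; exact hfo.neg
  have h1 : (∑' k, (-1 : ℝ) ^ (2 * k) * F (2 * k))
      + ∑' k, (-1 : ℝ) ^ (2 * k + 1) * F (2 * k + 1)
      = ∑' k, (-1 : ℝ) ^ k * F k :=
    tsum_even_add_odd (f := fun k => (-1 : ℝ) ^ k * F k) hse hso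
  have h2 : (∑' k, F (2 * k)) + ∑' k, F (2 * k + 1) = ∑' k, F k :=
    tsum_even_add_odd hfe hfo
  have hodd : ∑' k, F (2 * k + 1) = (2 : ℝ) ^ (-(s : ℤ)) * ∑' k, F k := by
    rw [← tsum_mul_left]
    congr 1; funext k
    have hc : ((2 * k + 1 : ℕ) : ℝ) + 1 = 2 * ((k : ℝ) + 1) := by push_cast; ring
    have hk1 : ((k : ℝ) + 1) ^ s ≠ 0 := by positivity
    rw [hF]
    simp only []
    rw [hc, mul_pow, zpow_neg, zpow_natCast]
    field_simp
  have hz : zetaR s = ∑' k, F k := rfl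
  rw [he_even, he_odd, tsum_neg] at h1
  have h2pow : (2 : ℝ) ^ ((1 : ℤ) - s) = 2 * (2 : ℝ) ^ (-(s : ℤ)) := by
    rw [show (1 : ℤ) - s = 1 + (-(s : ℤ)) by ring, zpow_add₀ (two_ne_zero), zpow_one]
  have heven : ∑' k, F (2 * k) = (∑' k, F k) - ∑' k, F (2 * k + 1) := by
    linarith [h2]
  calc ∑' i : ℕ, (-1 : ℝ) ^ i * (1 / ((i : ℝ) + 1) ^ s)
      = ∑' i : ℕ, (-1 : ℝ) ^ i * F i := rfl
    _ = ∑' k : ℕ, F (2 * k) + -∑' k : ℕ, F (2 * k + 1) := h1.symm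
    _ = (1 - (2 : ℝ) ^ ((1 : ℤ) - s)) * zetaR s := by
        rw [heven, hodd, h2pow, hz]
        ring

lemma integral_even_moment (m : ℕ) (hm : 1 ≤ m) :
    ∫ z : ℝ, z ^ (2 * m) * g z
      = 2 * (1 - (2 : ℝ) ^ ((1 : ℤ) - 2 * m)) * Real.Gamma (2 * m + 1) * zetaR (2 * m) := by
  set F : ℕ → ℝ → ℝ := fun i z =>
    (-1 : ℝ) ^ i * ((i : ℝ) + 1) * z ^ (2 * m) * Real.exp (-(((i : ℝ) + 1) * |z|)) with hFdef
  have hpowabs : ∀ z : ℝ, |z| ^ (2 * m) = z ^ (2 * m) := fun z =>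
    (even_two_mul m).pow_abs z
  have hFint : ∀ i, Integrable (F i) := by
    intro i
    have h := (integrable_pow_mul_exp (2 * m) (c := (i : ℝ) + 1) (by positivity)).const_mul
      ((-1 : ℝ) ^ i * ((i : ℝ) + 1))
    refine h.congr (Filter.Eventually.of_forall fun z => ?_)
    rw [hFdef]
    simp only []
    rw [hpowabs]
    ring
  have hFnormval : ∀ i, ∫ z : ℝ, ‖F i z‖
      = 2 * Real.Gamma ((2 * m : ℕ) + 1) * (1 / ((i : ℝ) + 1) ^ (2 * m)) := by
    intro i
    have h1 : ∀ z : ℝ, ‖F i z‖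
        = ((i : ℝ) + 1) * (|z| ^ (2 * m) * Real.exp (-(((i : ℝ) + 1) * |z|))) := by
      intro z
      rw [hFdef]
      simp only [Real.norm_eq_abs]
      rw [abs_mul, abs_mul, abs_mul, abs_pow, abs_neg, abs_one, one_pow, one_mul,
        abs_of_nonneg (Real.exp_pos _).le, abs_of_nonneg (by positivity : (0:ℝ) ≤ (i:ℝ) + 1),
        abs_pow]
      ring
    simp_rw [h1]
    rw [integral_const_mul, integral_pow_mul_exp (2 * m) (by positivity : (0:ℝ) < (i : ℝ) + 1)]
    have hne : ((i : ℝ) + 1) ≠ 0 := by positivity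
    field_simp
    ring
  have hFnorm : Summable fun i => ∫ z : ℝ, ‖F i z‖ := by
    simp_rw [hFnormval]
    exact (summable_zeta (2 * m) (by omega)).mul_left _
  have hsum : ∀ z : ℝ, HasSum (fun i => F i z) (z ^ (2 * m) * g z) := by
    intro z
    rcases eq_or_ne z 0 with rfl | hz
    · have : (fun i => F i 0) = fun _ => (0 : ℝ) := by
        funext i
        rw [hFdef]
        simp only []
        rw [zero_pow (by omega : 2 * m ≠ 0)]
        ring
      rw [this, zero_pow (by omega : 2 * m ≠ 0), zero_mul]
      exact hasSum_zero
    · set t : ℝ := |z| with ht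
      have htpos : 0 < t := abs_pos.mpr hz
      set x : ℝ := Real.exp (-t) with hx
      have hx0 : 0 < x := Real.exp_pos _
      have hx1 : x < 1 := Real.exp_lt_one_iff.mpr (by linarith)
      have hnorm : ‖-x‖ < 1 := by
        rw [norm_neg, Real.norm_eq_abs, abs_of_pos hx0]; exact hx1
      have h1 := hasSum_coe_mul_geometric_of_norm_lt_one (r := -x) hnorm
      have h2 := hasSum_geometric_of_norm_lt_one (ξ := -x) hnorm
      have h3 := (h1.add h2).mul_left (z ^ (2 * m) * x)
      have hterm : (fun i : ℕ => z ^ (2 * m) * x * ((i : ℝ) * (-x) ^ i + (-x) ^ i))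
          = fun i => F i z := by
        funext i
        rw [hFdef]
        simp only []
        have hexp : Real.exp (-(((i : ℝ) + 1) * t)) = x ^ (i + 1) := by
          rw [hx, ← Real.exp_nat_mul]
          congr 1
          push_cast
          ring
        rw [← ht, hexp, neg_pow, pow_succ]
        ring
      have hval : z ^ (2 * m) * x * (-x / (1 - -x) ^ 2 + (1 - -x)⁻¹)
          = z ^ (2 * m) * g z := by
        have hd : (0:ℝ) < 1 + x := by positivity
        have hgz : g z = x / (1 + x) ^ 2 := by
          rw [← g_abs, ← ht]
          unfold g
          rw [← hx]
        rw [hgz, sub_neg_eq_add]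
        field_simp
        ring
      rw [hterm, hval] at h3
      exact h3
  have hkey := hasSum_integral_of_summable_integral_norm (μ := volume) hFint hFnorm
  have htsum : ∀ z : ℝ, ∑' i, F i z = z ^ (2 * m) * g z := fun z => (hsum z).tsum_eq
  simp_rw [htsum] at hkey
  have hintFi : ∀ i : ℕ, ∫ z : ℝ, F i z
      = 2 * Real.Gamma ((2 * m : ℕ) + 1) * ((-1 : ℝ) ^ i * (1 / ((i : ℝ) + 1) ^ (2 * m))) := by
    intro i
    have h1 : ∀ z : ℝ, F i z = ((-1 : ℝ) ^ i * ((i : ℝ) + 1))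
        * (|z| ^ (2 * m) * Real.exp (-(((i : ℝ) + 1) * |z|))) := by
      intro z
      rw [hFdef]
      simp only []
      rw [hpowabs]
      ring
    simp_rw [h1]
    rw [integral_const_mul, integral_pow_mul_exp (2 * m) (by positivity : (0:ℝ) < (i : ℝ) + 1)]
    have hne : ((i : ℝ) + 1) ≠ 0 := by positivity
    field_simp
    ring
  simp_rw [hintFi] at hkey
  have := hkey.tsum_eq
  rw [tsum_mul_left] at this
  rw [← this, eta_eq (2 * m) (by omega)]
  push_cast
  ring

lemma integral_odd_moment (j : ℕ) (hj : Odd j) : ∫ z : ℝ, z ^ j * g z = 0 := by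
  have h := integral_neg_eq_self (fun z : ℝ => z ^ j * g z) volume
  have heq : ∀ z : ℝ, (-z) ^ j * g (-z) = -(z ^ j * g z) := by
    intro z
    rw [hj.neg_pow, g_neg]
    ring
  simp only [heq] at h
  rw [integral_neg] at h
  linarith

lemma integrable_pow_mul_g (j : ℕ) : Integrable (fun z : ℝ => z ^ j * g z) := by
  have hb := integrable_pow_mul_exp j one_pos
  refine hb.mono' ?_ (Filter.Eventually.of_forall fun z => ?_)
  · exact ((continuous_pow j).mul g_cont).aestronglyMeasurable
  · rw [Real.norm_eq_abs, abs_mul, abs_pow, abs_of_nonneg (g_nonneg z), one_mul]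
    exact mul_le_mul_of_nonneg_left (g_le z) (by positivity)

lemma C2_pos (α : ℝ) : 0 < C₂ α := by
  unfold C₂
  positivity

end BASLG2aux

open BASLG2aux in
theorem BASLG2_even_moments (k : ℕ) (hk : 0 < k) (α : ℝ) :
    ∫ z : ℝ, z ^ (2 * k) * f z α
      = (2 / C₂ α) *
        (4 * (1 - (2 : ℝ) ^ ((1 : ℤ) - 2 * k)) * Real.Gamma (2 * k + 1) * zetaR (2 * k)
          + 8 * α ^ 2 * (1 - (2 : ℝ) ^ (-(2 * (k : ℤ) + 1))) * Real.Gamma (2 * k + 3) * zetaR (2 * k + 2)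
          + α ^ 4 * (1 - (2 : ℝ) ^ (-(2 * (k : ℤ) + 3))) * Real.Gamma (2 * k + 5) * zetaR (2 * k + 4)) := by
  have hC := C2_pos α
  have hrw : ∀ z : ℝ, z ^ (2 * k) * f z α
      = (C₂ α)⁻¹ * 4 * (z ^ (2 * k) * g z)
        + (-((C₂ α)⁻¹ * (8 * α))) * (z ^ (2 * k + 1) * g z)
        + (C₂ α)⁻¹ * (8 * α ^ 2) * (z ^ (2 * k + 2) * g z)
        + (-((C₂ α)⁻¹ * (4 * α ^ 3))) * (z ^ (2 * k + 3) * g z)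
        + (C₂ α)⁻¹ * α ^ 4 * (z ^ (2 * k + 4) * g z) := by
    intro z
    have he : (0:ℝ) < 1 + Real.exp (-z) := by positivity
    unfold f g
    field_simp
    ring
  simp_rw [hrw]
  have i0 := (integrable_pow_mul_g (2 * k)).const_mul ((C₂ α)⁻¹ * 4)
  have i1 := (integrable_pow_mul_g (2 * k + 1)).const_mul (-((C₂ α)⁻¹ * (8 * α)))
  have i2 := (integrable_pow_mul_g (2 * k + 2)).const_mul ((C₂ α)⁻¹ * (8 * α ^ 2))
  have i3 := (integrable_pow_mul_g (2 * k + 3)).const_mul (-((C₂ α)⁻¹ * (4 * α ^ 3)))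
  have i4 := (integrable_pow_mul_g (2 * k + 4)).const_mul ((C₂ α)⁻¹ * α ^ 4)
  have i01 : Integrable (fun z : ℝ =>
      (C₂ α)⁻¹ * 4 * (z ^ (2 * k) * g z)
        + -((C₂ α)⁻¹ * (8 * α)) * (z ^ (2 * k + 1) * g z)) volume := i0.add i1
  have i012 : Integrable (fun z : ℝ =>
      (C₂ α)⁻¹ * 4 * (z ^ (2 * k) * g z)
        + -((C₂ α)⁻¹ * (8 * α)) * (z ^ (2 * k + 1) * g z)
        + (C₂ α)⁻¹ * (8 * α ^ 2) * (z ^ (2 * k + 2) * g z)) volume := i01.add i2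
  have i0123 : Integrable (fun z : ℝ =>
      (C₂ α)⁻¹ * 4 * (z ^ (2 * k) * g z)
        + -((C₂ α)⁻¹ * (8 * α)) * (z ^ (2 * k + 1) * g z)
        + (C₂ α)⁻¹ * (8 * α ^ 2) * (z ^ (2 * k + 2) * g z)
        + -((C₂ α)⁻¹ * (4 * α ^ 3)) * (z ^ (2 * k + 3) * g z)) volume := i012.add i3
  rw [integral_add i0123 i4,
    integral_add i012 i3,
    integral_add i01 i2,
    integral_add i0 i1,
    integral_const_mul, integral_const_mul, integral_const_mul, integral_const_mul,
    integral_const_mul]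
  have e0 : ∫ z : ℝ, z ^ (2 * k) * g z
      = 2 * (1 - (2 : ℝ) ^ ((1 : ℤ) - 2 * k)) * Real.Gamma (2 * k + 1) * zetaR (2 * k) :=
    integral_even_moment k hk
  have e1 : ∫ z : ℝ, z ^ (2 * k + 1) * g z = 0 :=
    integral_odd_moment (2 * k + 1) (odd_two_mul_add_one k)
  have e2 : ∫ z : ℝ, z ^ (2 * k + 2) * g z
      = 2 * (1 - (2 : ℝ) ^ (-(2 * (k : ℤ) + 1))) * Real.Gamma (2 * k + 3) * zetaR (2 * k + 2) := by
    rw [show 2 * k + 2 = 2 * (k + 1) by ring, integral_even_moment (k + 1) (by omega)]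
    push_cast
    ring_nf
  have e3 : ∫ z : ℝ, z ^ (2 * k + 3) * g z = 0 := by
    rw [show 2 * k + 3 = 2 * (k + 1) + 1 by ring]
    exact integral_odd_moment _ (odd_two_mul_add_one (k + 1))
  have e4 : ∫ z : ℝ, z ^ (2 * k + 4) * g z
      = 2 * (1 - (2 : ℝ) ^ (-(2 * (k : ℤ) + 3))) * Real.Gamma (2 * k + 5) * zetaR (2 * k + 4) := by
    rw [show 2 * k + 4 = 2 * (k + 2) by ring, integral_even_moment (k + 2) (by omega)]
    push_cast
    ring_nf
  rw [e0, e1, e2, e3, e4]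
  field_simp
  ring
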